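/- The function Δ₆ has a first-order zero at s = 1/2 with expansion Δ₆(1/2 + δ) = ((3γ − 2·log(2π) + ψ(1/2))/(2·ζ(1/2)))·δ + O(δ²); precisely, the limit of Δ₆(1/2 + h)/h as h → 0 (h ≠ 0, h ∈ ℂ) equals (3γ − 2·log(2π) + ψ(1/2))/(2·ζ(1/2)), where γ is the Euler–Mascheroni constant, ψ(1/2) = Γ′(1/2)/Γ(1/2) is the digamma function at 1/2 (expressible as deriv Real.Gamma (1/2) / Real.Gamma (1/2)), and ζ(1/2) is the value of the Riemann zeta function at 1/2. -/

import Mathlib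

open Filter

noncomputable def D (s : ℂ) : ℂ :=
  ((Real.pi ^ (-(1/4) : ℝ) : ℝ) * Complex.Gamma s +
    (Real.pi ^ ((1/4) : ℝ) : ℝ) * Complex.Gamma (s - 1/2)) / Complex.Gamma (s - 1/4)

noncomputable def Δ₆ (s : ℂ) : ℂ :=
  (completedRiemannZeta (2 * s) + completedRiemannZeta (2 * s - 1)) /
    (completedRiemannZeta (2 * s - 1/2) * D s)

open Complex Set Topology

noncomputable def etaTerm (k : ℕ) (s : ℂ) : ℂ := (2*k+1 : ℂ)^(-s) - (2*k+2 : ℂ)^(-s)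
noncomputable def etaFun (s : ℂ) : ℂ := ∑' k, etaTerm k s

lemma etaTerm_bound {a : ℝ} (ha : 0 < a) {s : ℂ} (hs : a ≤ s.re) (k : ℕ) :
    ‖etaTerm k s‖ ≤ ‖s‖ * ((2*k+1:ℝ)) ^ (-a-1) := by
  have hk0 : (0:ℝ) ≤ (k:ℝ) := Nat.cast_nonneg k
  have hx1 : (1:ℝ) ≤ 2*k+1 := by linarith
  have hs0 : s ≠ 0 := by
    intro h; rw [h] at hs; simp at hs; linarith
  set F : ℝ → ℂ := fun t => (t:ℂ)^(-s) with hF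
  have key : ∀ t ∈ Icc (2*(k:ℝ)+1) (2*k+2),
      HasDerivWithinAt F (-s * (t:ℂ)^(-s-1)) (Icc (2*(k:ℝ)+1) (2*k+2)) t := by
    intro t ht
    have ht1 : (1:ℝ) ≤ t := le_trans hx1 ht.1
    have ht0 : t ≠ 0 := by linarith
    have h1 : HasDerivAt (fun y:ℝ => (y:ℂ)^(-s-1+1)/(-s-1+1)) ((t:ℂ)^(-s-1)) t :=
      hasDerivAt_ofReal_cpow_const' ht0 (by
        intro h
        apply hs0
        have : -s = 0 := by linear_combination h
        simpa using this)
    have h2 := h1.const_mul (-s)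
    have heq : (fun y:ℝ => -s * ((y:ℂ)^(-s-1+1)/(-s-1+1))) = F := by
      funext y
      have : (-s-1+1 : ℂ) = -s := by ring
      rw [this, hF]
      field_simp
    rw [heq] at h2
    exact h2.hasDerivWithinAt
  have bnd : ∀ t ∈ Icc (2*(k:ℝ)+1) (2*k+2),
      ‖-s * (t:ℂ)^(-s-1)‖ ≤ ‖s‖ * ((2*k+1:ℝ)) ^ (-a-1) := by
    intro t ht
    have ht1 : (1:ℝ) ≤ t := le_trans hx1 ht.1
    have ht0 : (0:ℝ) < t := by linarith
    rw [norm_mul, norm_neg]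
    refine mul_le_mul_of_nonneg_left ?_ (norm_nonneg s)
    have : ‖(t:ℂ)^(-s-1)‖ = t ^ ((-s-1).re) := by
      rw [norm_cpow_eq_rpow_re_of_pos ht0]
    rw [this]
    have e1 : t ^ ((-s-1).re) ≤ t ^ (-a-1) := by
      apply Real.rpow_le_rpow_of_exponent_le ht1
      simp only [Complex.sub_re, Complex.neg_re, Complex.one_re]
      linarith
    have e2 : t ^ (-a-1) ≤ ((2*k+1:ℝ)) ^ (-a-1) :=
      Real.rpow_le_rpow_of_nonpos (by positivity) ht.1 (by linarith)
    linarith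
  have := Convex.norm_image_sub_le_of_norm_hasDerivWithin_le key bnd (convex_Icc _ _)
    (left_mem_Icc.2 (by linarith)) (right_mem_Icc.2 (by linarith))
  have hnorm : ‖(2*(k:ℝ)+2 : ℝ) - (2*k+1)‖ = 1 := by norm_num
  rw [hnorm, mul_one] at this
  have : ‖F (2*k+1) - F (2*k+2)‖ ≤ ‖s‖ * ((2*k+1:ℝ)) ^ (-a-1) := by
    rwa [norm_sub_rev]
  have hcast : etaTerm k s = F (2*k+1) - F (2*k+2) := by
    rw [etaTerm, hF]
    push_cast
    norm_num
  rwa [hcast]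

lemma summable_aux {a : ℝ} (ha : 0 < a) : Summable (fun k : ℕ => ((2*k+1:ℝ)) ^ (-a-1)) := by
  have h : Summable (fun k : ℕ => ((k:ℝ)+1) ^ (-a-1)) := by
    have := (Real.summable_nat_rpow (p := -a-1)).2 (by linarith)
    have h2 := (summable_nat_add_iff 1).2 this
    simpa using h2
  refine h.of_nonneg_of_le (fun k => by positivity) (fun k => ?_)
  apply Real.rpow_le_rpow_of_nonpos (by positivity) (by linarith [Nat.cast_nonneg (α := ℝ) k]) (by linarith)

lemma summable_etaTerm {s : ℂ} (hs : 0 < s.re) : Summable (fun k => etaTerm k s) := by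
  apply Summable.of_norm
  apply Summable.of_nonneg_of_le (fun k => norm_nonneg _) (fun k => etaTerm_bound hs le_rfl k)
  exact (summable_aux hs).mul_left _

lemma etaFun_differentiableAt {s₀ : ℂ} (h : 0 < s₀.re) : DifferentiableAt ℂ etaFun s₀ := by
  set a := s₀.re / 2 with ha
  have ha0 : 0 < a := by positivity
  set r := s₀.re / 2 with hr
  set B := ‖s₀‖ + r with hB
  have hsub : ∀ s ∈ Metric.ball s₀ r, a ≤ s.re ∧ ‖s‖ ≤ B := by
    intro s hsmem
    rw [Metric.mem_ball, Complex.dist_eq] at hsmem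
    constructor
    · have := Complex.abs_re_le_norm (s - s₀)
      have h2 : |s.re - s₀.re| ≤ ‖s - s₀‖ := by simpa using this
      have := abs_le.1 h2
      simp only [ha]
      linarith [this.1]
    · calc ‖s‖ = ‖s₀ + (s - s₀)‖ := by ring_nf
        _ ≤ ‖s₀‖ + ‖s - s₀‖ := norm_add_le _ _
        _ ≤ B := by rw [hB]; linarith
  have hdiff : DifferentiableOn ℂ etaFun (Metric.ball s₀ r) := by
    apply TendstoLocallyUniformlyOn.differentiableOn (F := fun (t : Finset ℕ) s => ∑ k ∈ t, etaTerm k s) (φ := (atTop : Filter (Finset ℕ)))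
    · apply TendstoUniformlyOn.tendstoLocallyUniformlyOn
      have hb : ∀ (k : ℕ), ∀ s ∈ Metric.ball s₀ r, ‖etaTerm k s‖ ≤ B * ((2*k+1:ℝ)) ^ (-a-1) := by
        intro k s hsmem
        obtain ⟨h1, h2⟩ := hsub s hsmem
        calc ‖etaTerm k s‖ ≤ ‖s‖ * ((2*k+1:ℝ)) ^ (-a-1) := etaTerm_bound ha0 h1 k
          _ ≤ B * ((2*k+1:ℝ)) ^ (-a-1) := by
              apply mul_le_mul_of_nonneg_right h2 (by positivity)
      exact tendstoUniformlyOn_tsum ((summable_aux ha0).mul_left _) hb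
    · filter_upwards with t
      apply DifferentiableOn.fun_sum
      intro k _
      have d1 : DifferentiableOn ℂ (fun s : ℂ => (2*(k:ℂ)+1) ^ (-s)) (Metric.ball s₀ r) := by
        apply DifferentiableOn.const_cpow (differentiable_id.neg).differentiableOn
        left
        have h' : (2*(k:ℂ)+1) = ((2*k+1:ℕ):ℂ) := by push_cast; ring
        rw [h', Ne, Nat.cast_eq_zero]
        omega
      have d2 : DifferentiableOn ℂ (fun s : ℂ => (2*(k:ℂ)+2) ^ (-s)) (Metric.ball s₀ r) := by
        apply DifferentiableOn.const_cpow (differentiable_id.neg).differentiableOn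
        left
        have h' : (2*(k:ℂ)+2) = ((2*k+2:ℕ):ℂ) := by push_cast; ring
        rw [h', Ne, Nat.cast_eq_zero]
        omega
      exact d1.sub d2
    · exact Metric.isOpen_ball
  exact hdiff.differentiableAt (Metric.isOpen_ball.mem_nhds (by simp [hr]; positivity))

lemma summable_kp {p : ℝ} (hp : p < -1) : Summable (fun k : ℕ => ((k:ℝ)+1) ^ p) := by
  have := (Real.summable_nat_rpow (p := p)).2 hp
  have h2 := (summable_nat_add_iff 1).2 this
  simpa using h2

lemma norm_cpow_nat (c : ℝ) (hc : 0 < c) (s : ℂ) : ‖(c:ℂ) ^ (-s)‖ = c ^ (-s.re) := by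
  rw [norm_cpow_eq_rpow_re_of_pos hc]
  norm_num

lemma summable_odd_cpow {s : ℂ} (hs : 1 < s.re) :
    Summable (fun k : ℕ => (2*(k:ℂ)+1) ^ (-s)) := by
  apply Summable.of_norm
  apply Summable.of_nonneg_of_le (fun k => norm_nonneg _) (fun k => ?_)
    (summable_kp (p := -s.re) (by linarith))
  have hc : (0:ℝ) < 2*(k:ℝ)+1 := by positivity
  have : (2*(k:ℂ)+1) = ((2*(k:ℝ)+1 : ℝ) : ℂ) := by push_cast; ring
  rw [this, norm_cpow_nat _ hc]
  exact Real.rpow_le_rpow_of_nonpos (by positivity) (by linarith [Nat.cast_nonneg (α := ℝ) k]) (by linarith)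

lemma summable_even_cpow {s : ℂ} (hs : 1 < s.re) :
    Summable (fun k : ℕ => (2*(k:ℂ)+2) ^ (-s)) := by
  apply Summable.of_norm
  apply Summable.of_nonneg_of_le (fun k => norm_nonneg _) (fun k => ?_)
    (summable_kp (p := -s.re) (by linarith))
  have hc : (0:ℝ) < 2*(k:ℝ)+2 := by positivity
  have : (2*(k:ℂ)+2) = ((2*(k:ℝ)+2 : ℝ) : ℂ) := by push_cast; ring
  rw [this, norm_cpow_nat _ hc]
  exact Real.rpow_le_rpow_of_nonpos (by positivity) (by linarith [Nat.cast_nonneg (α := ℝ) k]) (by linarith)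

lemma etaFun_eq_of_one_lt {s : ℂ} (hs : 1 < s.re) :
    etaFun s = (1 - (2:ℂ)^((1:ℂ)-s)) * riemannZeta s := by
  set f : ℕ → ℂ := fun n => ((n:ℂ)+1) ^ (-s) with hf
  have hzeta : riemannZeta s = ∑' n : ℕ, f n := by
    rw [zeta_eq_tsum_one_div_nat_add_one_cpow hs]
    congr 1; funext n
    show 1/((n:ℂ)+1)^s = ((n:ℂ)+1)^(-s)
    rw [cpow_neg, one_div]
  have e1 : (fun k : ℕ => f (2*k)) = (fun k : ℕ => (2*(k:ℂ)+1)^(-s)) := by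
    funext k; simp only [hf]; push_cast; ring_nf
  have e2 : (fun k : ℕ => f (2*k+1)) = (fun k : ℕ => (2*(k:ℂ)+2)^(-s)) := by
    funext k; simp only [hf]; push_cast; ring_nf
  have hodd := summable_odd_cpow hs
  have heven := summable_even_cpow hs
  have hsplit := tsum_even_add_odd (f := f) (by rw [e1]; exact hodd) (by rw [e2]; exact heven)
  rw [e1, e2] at hsplit
  have heven' : ∑' k : ℕ, (2*(k:ℂ)+2) ^ (-s) = (2:ℂ)^(-s) * riemannZeta s := by
    rw [hzeta, ← tsum_mul_left]
    congr 1; funext k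
    have hb : (2*(k:ℂ)+2) = ((2:ℝ):ℂ) * (((k:ℝ)+1 : ℝ) : ℂ) := by push_cast; ring
    rw [hb, mul_cpow_ofReal_nonneg (by norm_num) (by positivity)]
    have h2 : ((2:ℝ):ℂ) = (2:ℂ) := by norm_num
    have hk : (((k:ℝ)+1 : ℝ) : ℂ) = ((k:ℂ)+1) := by push_cast; ring
    rw [h2, hk, hf]
  have hmain : etaFun s = (∑' k : ℕ, (2*(k:ℂ)+1) ^ (-s)) - ∑' k : ℕ, (2*(k:ℂ)+2) ^ (-s) := by
    rw [etaFun]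
    exact Summable.tsum_sub hodd heven
  rw [← hzeta] at hsplit
  have h21 : (2:ℂ)^((1:ℂ)-s) = 2 * (2:ℂ)^(-s) := by
    rw [sub_eq_add_neg, Complex.cpow_add _ _ (two_ne_zero), Complex.cpow_one]
  rw [hmain, h21]
  linear_combination hsplit - 2 * heven'

def Uset : Set ℂ := {s : ℂ | 0 < s.re ∧ s ≠ 1}

lemma Uset_open : IsOpen Uset := by
  have h1 : IsOpen {s : ℂ | 0 < s.re} := isOpen_lt continuous_const Complex.continuous_re
  have h2 : IsOpen ({(1:ℂ)}ᶜ) := isOpen_compl_singleton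
  have : Uset = {s : ℂ | 0 < s.re} ∩ {(1:ℂ)}ᶜ := by
    ext s; simp [Uset, and_comm]
  rw [this]
  exact h1.inter h2

lemma Uset_preconnected : IsPreconnected Uset := by
  set A : Set ℂ := {s | 0 < s.re ∧ s.re < 1} with hA
  set B : Set ℂ := {s | 1 < s.re} with hB
  set C : Set ℂ := {s | 0 < s.re ∧ 0 < s.im} with hC
  set Dd : Set ℂ := {s | 0 < s.re ∧ s.im < 0} with hD
  have cA : Convex ℝ A := (convex_halfSpace_re_gt 0).inter (convex_halfSpace_re_lt 1)
  have cB : Convex ℝ B := convex_halfSpace_re_gt 1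
  have cC : Convex ℝ C := (convex_halfSpace_re_gt 0).inter (convex_halfSpace_im_gt 0)
  have cD : Convex ℝ Dd := (convex_halfSpace_re_gt 0).inter (convex_halfSpace_im_lt 0)
  have hU : Uset = ((A ∪ C) ∪ B) ∪ Dd := by
    ext s
    simp only [Uset, hA, hB, hC, hD, Set.mem_setOf_eq, Set.mem_union]
    constructor
    · rintro ⟨hre, hne⟩
      rcases lt_trichotomy s.im 0 with him | him | him
      · right; exact ⟨hre, him⟩
      · rcases lt_trichotomy s.re 1 with h1 | h1 | h1
        · left; left; left; exact ⟨hre, h1⟩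
        · exact absurd (Complex.ext h1 him) hne
        · left; right; exact h1
      · left; left; right; exact ⟨hre, him⟩
    · rintro ((((⟨h1, h2⟩ | ⟨h1, h2⟩) | h1) | ⟨h1, h2⟩))
      · exact ⟨h1, fun he => by rw [he] at h2; simp at h2⟩
      · exact ⟨h1, fun he => by rw [he] at h2; simp at h2⟩
      · refine ⟨by linarith, fun he => by rw [he] at h1; simp at h1⟩
      · exact ⟨h1, fun he => by rw [he] at h2; simp at h2⟩
  rw [hU]
  have p1 : IsPreconnected (A ∪ C) := by
    apply IsPreconnected.union (⟨1/2, 1/2⟩ : ℂ)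
    · constructor <;> norm_num
    · constructor <;> norm_num
    · exact cA.isPreconnected
    · exact cC.isPreconnected
  have p2 : IsPreconnected ((A ∪ C) ∪ B) := by
    apply IsPreconnected.union (⟨2, 1⟩ : ℂ)
    · right; constructor <;> norm_num
    · norm_num [hB]
    · exact p1
    · exact cB.isPreconnected
  apply IsPreconnected.union (⟨1/2, -1⟩ : ℂ)
  · left; left; constructor <;> norm_num
  · constructor <;> norm_num
  · exact p2
  · exact cD.isPreconnected

lemma etaFun_eq_on_Uset : Set.EqOn etaFun (fun s => (1 - (2:ℂ)^((1:ℂ)-s)) * riemannZeta s) Uset := by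
  have hg : AnalyticOnNhd ℂ etaFun Uset := by
    apply DifferentiableOn.analyticOnNhd _ Uset_open
    intro s hsmem
    exact (etaFun_differentiableAt hsmem.1).differentiableWithinAt
  have hh : AnalyticOnNhd ℂ (fun s => (1 - (2:ℂ)^((1:ℂ)-s)) * riemannZeta s) Uset := by
    apply DifferentiableOn.analyticOnNhd _ Uset_open
    intro s hsmem
    apply DifferentiableAt.differentiableWithinAt
    apply DifferentiableAt.mul
    · apply DifferentiableAt.sub (differentiableAt_const _)
      apply DifferentiableAt.const_cpow
      · exact (differentiableAt_const _).sub differentiableAt_id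
      · exact Or.inl two_ne_zero
    · exact differentiableAt_riemannZeta hsmem.2
  have h2mem : (2:ℂ) ∈ Uset := by constructor <;> norm_num [Uset]
  apply AnalyticOnNhd.eqOn_of_preconnected_of_eventuallyEq hg hh Uset_preconnected h2mem
  have hopen : IsOpen {s : ℂ | 1 < s.re} := isOpen_lt continuous_const Complex.continuous_re
  filter_upwards [hopen.mem_nhds (by norm_num)] with s hsmem
  exact etaFun_eq_of_one_lt hsmem

lemma etaFun_half_pos : ∃ x : ℝ, 0 < x ∧ etaFun (1/2) = (x : ℂ) := by
  set g : ℕ → ℝ := fun k => (2*(k:ℝ)+1) ^ (-(1/2) : ℝ) - (2*(k:ℝ)+2) ^ (-(1/2) : ℝ) with hg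
  have hterm : ∀ k : ℕ, etaTerm k (1/2) = ((g k : ℝ) : ℂ) := by
    intro k
    have h1 : (2*(k:ℂ)+1) = ((2*(k:ℝ)+1 : ℝ) : ℂ) := by push_cast; ring
    have h2 : (2*(k:ℂ)+2) = ((2*(k:ℝ)+2 : ℝ) : ℂ) := by push_cast; ring
    have h3 : (-(1/2) : ℂ) = ((-(1/2) : ℝ) : ℂ) := by norm_num
    rw [etaTerm, h1, h2, h3, ← Complex.ofReal_cpow (by positivity) _,
      ← Complex.ofReal_cpow (by positivity) _, hg]
    push_cast
    ring
  have hsummc : Summable (fun k => etaTerm k (1/2 : ℂ)) := summable_etaTerm (by norm_num)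
  have hsumm : Summable g := by
    have := hsummc.congr (fun k => hterm k)
    exact_mod_cast Complex.summable_ofReal.1 this
  refine ⟨∑' k, g k, ?_, ?_⟩
  · apply Summable.tsum_pos hsumm (fun k => ?_) 0
    · have : (2*(0:ℝ)+2) ^ (-(1/2) : ℝ) < (2*(0:ℝ)+1) ^ (-(1/2) : ℝ) :=
        Real.rpow_lt_rpow_of_neg (by norm_num) (by norm_num) (by norm_num)
      simp only [hg]
      norm_num at this ⊢
      linarith
    · have h1 : (2*(k:ℝ)+2) ^ (-(1/2) : ℝ) ≤ (2*(k:ℝ)+1) ^ (-(1/2) : ℝ) :=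
        (Real.rpow_lt_rpow_of_neg (by positivity) (by linarith) (by norm_num)).le
      simp only [hg]
      linarith
  · rw [etaFun, Complex.ofReal_tsum]
    exact tsum_congr hterm

lemma riemannZeta_half_ne_zero : riemannZeta (1/2 : ℂ) ≠ 0 := by
  have hmem : (1/2 : ℂ) ∈ Uset := by constructor <;> norm_num [Uset]
  have heq := etaFun_eq_on_Uset hmem
  obtain ⟨x, hx, hxe⟩ := etaFun_half_pos
  intro hzero
  have h2 : (x:ℂ) = (1 - (2:ℂ)^((1:ℂ)-(1/2:ℂ))) * riemannZeta (1/2) := by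
    rw [← hxe]; exact heq
  rw [hzero, mul_zero] at h2
  exact hx.ne' (by exact_mod_cast h2)

noncomputable def Nfun (h : ℂ) : ℂ :=
  completedRiemannZeta₀ (1+2*h) + completedRiemannZeta₀ (2*h) - 1/(1+2*h) - 1/(1-2*h)

lemma numerator_eq (h : ℂ) :
    completedRiemannZeta (1+2*h) + completedRiemannZeta (2*h) = Nfun h := by
  have e1 := completedRiemannZeta_eq (1+2*h)
  have e2 := completedRiemannZeta_eq (2*h)
  have e3 : (1:ℂ)/(1-(1+2*h)) = -(1/(2*h)) := by
    rw [show (1:ℂ)-(1+2*h) = -(2*h) by ring, div_neg]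
  rw [Nfun]
  linear_combination e1 + e2 + e3

lemma quarter_ne_neg_nat : ∀ m : ℕ, (1/4 : ℂ) ≠ -m := by
  intro m heq
  have := congrArg Complex.re heq
  simp only [Complex.div_re, Complex.one_re, Complex.neg_re, Complex.natCast_re] at this
  norm_num at this
  linarith [Nat.cast_nonneg (α := ℝ) m]

lemma Gamma_quarter_ne_zero : Complex.Gamma (1/4) ≠ 0 :=
  Complex.Gamma_ne_zero quarter_ne_neg_nat

lemma tendsto_hD : Filter.Tendsto (fun h : ℂ => h * D (1/2 + h)) (nhdsWithin 0 {0}ᶜ)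
    (nhds (((Real.pi ^ ((1/4) : ℝ) : ℝ) : ℂ) / Complex.Gamma (1/4))) := by
  set G : ℂ → ℂ := fun h =>
    (((Real.pi ^ (-(1/4) : ℝ) : ℝ) : ℂ) * (h * Complex.Gamma (1/2+h)) +
      ((Real.pi ^ ((1/4) : ℝ) : ℝ) : ℂ) * Complex.Gamma (h+1)) / Complex.Gamma (h+1/4) with hG
  have heq : ∀ h : ℂ, h ≠ 0 → h * D (1/2 + h) = G h := by
    intro h hne
    simp only [hG]
    rw [D, show ((1:ℂ)/2+h-1/2) = h by ring, show ((1:ℂ)/2+h-1/4) = h+1/4 by ring,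
      Complex.Gamma_add_one h hne, ← mul_div_assoc]
    congr 1
    ring
  have hcont : Filter.Tendsto G (nhds 0) (nhds (((Real.pi ^ ((1/4) : ℝ) : ℝ) : ℂ) / Complex.Gamma (1/4))) := by
    have c1 : ContinuousAt (fun h : ℂ => Complex.Gamma (1/2+h)) 0 := by
      apply ContinuousAt.comp
      · apply (Complex.differentiableAt_Gamma _ ?_).continuousAt
        intro m heq
        have := congrArg Complex.re heq
        simp only [Complex.add_re, Complex.div_re, Complex.one_re, Complex.zero_re,
          Complex.neg_re, Complex.natCast_re] at this
        norm_num at this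
        linarith [Nat.cast_nonneg (α := ℝ) m]
      · fun_prop
    have c2 : ContinuousAt (fun h : ℂ => Complex.Gamma (h+1)) 0 := by
      apply ContinuousAt.comp
      · apply (Complex.differentiableAt_Gamma _ ?_).continuousAt
        intro m heq
        have := congrArg Complex.re heq
        simp only [Complex.add_re, Complex.zero_re, Complex.one_re,
          Complex.neg_re, Complex.natCast_re] at this
        norm_num at this
        linarith [Nat.cast_nonneg (α := ℝ) m]
      · fun_prop
    have c3 : ContinuousAt (fun h : ℂ => Complex.Gamma (h+1/4)) 0 := by
      apply ContinuousAt.comp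
      · apply (Complex.differentiableAt_Gamma _ ?_).continuousAt
        simpa using quarter_ne_neg_nat
      · fun_prop
    have : ContinuousAt G 0 := by
      apply ContinuousAt.div
      · exact (continuousAt_const.mul (continuousAt_id.mul c1)).add (continuousAt_const.mul c2)
      · exact c3
      · simpa using Gamma_quarter_ne_zero
    have hval : G 0 = ((Real.pi ^ ((1/4) : ℝ) : ℝ) : ℂ) / Complex.Gamma (1/4) := by
      rw [hG]
      simp only [zero_mul, mul_zero, zero_add, add_zero]
      rw [Complex.Gamma_one, mul_one]
    rw [← hval]
    exact this.tendsto
  apply Filter.Tendsto.congr' _ (hcont.mono_left nhdsWithin_le_nhds)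
  filter_upwards [self_mem_nhdsWithin] with h hne
  exact (heq h hne).symm

lemma tendsto_Nfun : Filter.Tendsto Nfun (nhds 0)
    (nhds ((Real.eulerMascheroniConstant : ℂ) - Complex.log (4 * Real.pi))) := by
  have hz : completedRiemannZeta₀ (0:ℂ) = completedRiemannZeta₀ 1 := by
    have := completedRiemannZeta₀_one_sub 1
    simpa using this
  have hc : ContinuousAt Nfun 0 := by
    have hΛ := differentiable_completedZeta₀.continuous
    apply ContinuousAt.sub
    apply ContinuousAt.sub
    apply ContinuousAt.add
    · exact (hΛ.continuousAt).comp (by fun_prop)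
    · exact (hΛ.continuousAt).comp (by fun_prop)
    · apply ContinuousAt.div continuousAt_const (by fun_prop)
      norm_num
    · apply ContinuousAt.div continuousAt_const (by fun_prop)
      norm_num
  have hval : Nfun 0 = (Real.eulerMascheroniConstant : ℂ) - Complex.log (4 * Real.pi) := by
    rw [Nfun]
    norm_num [hz, completedRiemannZeta₀_one]
    ring
  rw [← hval]
  exact hc.tendsto

lemma Lambda_half : completedRiemannZeta (1/2) = Complex.Gammaℝ (1/2) * riemannZeta (1/2) := by
  have h := riemannZeta_def_of_ne_zero (s := 1/2) (by norm_num)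
  have hg : Complex.Gammaℝ (1/2:ℂ) ≠ 0 := Complex.Gammaℝ_ne_zero_of_re_pos (by norm_num)
  rw [h]
  field_simp

lemma Lambda_half_ne_zero : completedRiemannZeta (1/2 : ℂ) ≠ 0 := by
  rw [Lambda_half]
  exact mul_ne_zero (Complex.Gammaℝ_ne_zero_of_re_pos (by norm_num)) riemannZeta_half_ne_zero

lemma tendsto_Lambda_mid : Filter.Tendsto (fun h : ℂ => completedRiemannZeta (1/2 + 2*h)) (nhds 0)
    (nhds (completedRiemannZeta (1/2))) := by
  have hc : ContinuousAt completedRiemannZeta (1/2) :=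
    (differentiableAt_completedZeta (by norm_num) (by norm_num)).continuousAt
  have : Filter.Tendsto (fun h : ℂ => (1/2 : ℂ) + 2*h) (nhds 0) (nhds (1/2)) := by
    have : ContinuousAt (fun h : ℂ => (1/2 : ℂ) + 2*h) 0 := by fun_prop
    simpa using this.tendsto
  exact hc.tendsto.comp this

theorem Delta6_zero_at_half :
    Tendsto (fun h : ℂ => Δ₆ (1/2 + h) / h) (nhdsWithin 0 {0}ᶜ)
      (nhds (((3 * Real.eulerMascheroniConstant - 2 * Real.log (2 * Real.pi) +
          deriv Real.Gamma (1/2) / Real.Gamma (1/2) : ℝ) : ℂ) /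
        (2 * riemannZeta (1/2)))) := by
  set c₂ : ℂ := ((Real.pi ^ ((1/4) : ℝ) : ℝ) : ℂ) with hc₂
  set A : ℂ := (Real.eulerMascheroniConstant : ℂ) - Complex.log (4 * Real.pi) with hA
  set L : ℂ := completedRiemannZeta (1/2) * (c₂ / Complex.Gamma (1/4)) with hL
  have hLne : L ≠ 0 := by
    apply mul_ne_zero Lambda_half_ne_zero
    apply div_ne_zero _ Gamma_quarter_ne_zero
    rw [hc₂]
    norm_cast
    positivity
  have tden : Filter.Tendsto (fun h : ℂ => completedRiemannZeta (1/2 + 2*h) * (h * D (1/2+h)))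
      (nhdsWithin 0 {0}ᶜ) (nhds L) :=
    (tendsto_Lambda_mid.mono_left nhdsWithin_le_nhds).mul tendsto_hD
  have tmain : Filter.Tendsto
      (fun h : ℂ => Nfun h / (completedRiemannZeta (1/2 + 2*h) * (h * D (1/2+h))))
      (nhdsWithin 0 {0}ᶜ) (nhds (A / L)) :=
    Filter.Tendsto.div (tendsto_Nfun.mono_left nhdsWithin_le_nhds) tden hLne
  have ev : (fun h : ℂ => Nfun h / (completedRiemannZeta (1/2 + 2*h) * (h * D (1/2+h))))
      =ᶠ[nhdsWithin 0 {0}ᶜ] (fun h : ℂ => Δ₆ (1/2 + h) / h) := by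
    filter_upwards [self_mem_nhdsWithin] with h hne
    rw [Set.mem_compl_iff, Set.mem_singleton_iff] at hne
    simp only [Δ₆]
    rw [show (2*((1:ℂ)/2+h)) = 1+2*h by ring]
    rw [show ((1:ℂ)+2*h-1) = 2*h by ring, show ((1:ℂ)+2*h-1/2) = 1/2+2*h by ring,
        numerator_eq, div_div]
    congr 1
    ring
  have final := tmain.congr' ev
  -- identify the limit value
  have hGr : Complex.Gammaℝ (1/2:ℂ) = ((Real.pi ^ (-(1/4):ℝ) : ℝ) : ℂ) * Complex.Gamma (1/4) := by
    rw [Complex.Gammaℝ_def]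
    rw [show (-(1/2:ℂ)/2) = ((-(1/4):ℝ):ℂ) by norm_num, show ((1/2:ℂ)/2) = 1/4 by norm_num]
    rw [← Complex.ofReal_cpow Real.pi_pos.le]
  have hpi : ((Real.pi ^ (-(1/4):ℝ) : ℝ) : ℂ) * c₂ = 1 := by
    rw [hc₂, ← Complex.ofReal_mul, ← Real.rpow_add Real.pi_pos]
    norm_num
  have hLval : L = riemannZeta (1/2) := by
    rw [hL, Lambda_half, hGr]
    have hre : (((Real.pi ^ (-(1/4):ℝ) : ℝ) : ℂ) * Complex.Gamma (1/4) * riemannZeta (1/2)) * (c₂ / Complex.Gamma (1/4))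
        = (((Real.pi ^ (-(1/4):ℝ) : ℝ) : ℂ) * c₂) * riemannZeta (1/2) * (Complex.Gamma (1/4) / Complex.Gamma (1/4)) := by
      ring
    rw [hre, hpi, div_self Gamma_quarter_ne_zero]
    ring
  have hAval : A = ((Real.eulerMascheroniConstant - Real.log (4*Real.pi) : ℝ) : ℂ) := by
    rw [hA, show ((4:ℂ)*(Real.pi:ℝ)) = ((4*Real.pi : ℝ):ℂ) by push_cast; ring,
      ← Complex.ofReal_log (by positivity)]
    push_cast
    ring
  have hratio : deriv Real.Gamma (1/2) / Real.Gamma (1/2) = -(Real.eulerMascheroniConstant + 2*Real.log 2) := by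
    rw [Real.hasDerivAt_Gamma_one_half.deriv, Real.Gamma_one_half_eq]
    have hs : Real.sqrt Real.pi ≠ 0 := by positivity
    field_simp
  have hlog : Real.log (4*Real.pi) = Real.log (2*Real.pi) + Real.log 2 := by
    rw [← Real.log_mul (by positivity) (by norm_num)]
    congr 1
    ring
  have ht : (3 * Real.eulerMascheroniConstant - 2 * Real.log (2 * Real.pi) +
      deriv Real.Gamma (1/2) / Real.Gamma (1/2) : ℝ) = 2*(Real.eulerMascheroniConstant - Real.log (4*Real.pi)) := by
    rw [hratio, hlog]
    ring
  have hvalue : A / L = (((3 * Real.eulerMascheroniConstant - 2 * Real.log (2 * Real.pi) +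
      deriv Real.Gamma (1/2) / Real.Gamma (1/2) : ℝ)) : ℂ) / (2 * riemannZeta (1/2)) := by
    rw [hLval, hAval, ht]
    have hz : riemannZeta (1/2 : ℂ) ≠ 0 := riemannZeta_half_ne_zero
    field_simp
    push_cast
    ring
  rwa [hvalue] at final
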